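/- Let X ~ P_X on 𝒳 and S ~ θ on 𝒮 be independent, let W = S − X with pmf ξ, and let Y be drawn given W according to the structured policy b with respect to (θ, ξ). Then I(W; Y) = I(W; X) = H(W) − H(S). -/
import Mathlib


open Finset
open scoped Classical

namespace SmartMeter

/-! ### Basic information measures for finitely supported distributions.
All entropies and mutual informations are in bits (base-2 logarithms). -/

/-- Probability that the random variable `Z` takes the value `z` under the pmf `p`. -/
noncomputable def pr {Ω α : Type*} [Fintype Ω] [DecidableEq α]
    (p : Ω → ℝ) (Z : Ω → α) (z : α) : ℝ :=
  ∑ ω ∈ Finset.univ.filter (fun ω => Z ω = z), p ω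

/-- Shannon entropy (in bits) of the random variable `Z` under the pmf `p`. -/
noncomputable def ent {Ω α : Type*} [Fintype Ω] [DecidableEq α]
    (p : Ω → ℝ) (Z : Ω → α) : ℝ :=
  -∑ z ∈ Finset.univ.image Z, pr p Z z * Real.logb 2 (pr p Z z)

/-- Mutual information `I(A; B)`. -/
noncomputable def mutInfo {Ω α β : Type*} [Fintype Ω] [DecidableEq α] [DecidableEq β]
    (p : Ω → ℝ) (A : Ω → α) (B : Ω → β) : ℝ :=
  ent p A + ent p B - ent p (fun ω => (A ω, B ω))

/-- Conditional entropy `H(A | C)`. -/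
noncomputable def condEnt {Ω α γ : Type*} [Fintype Ω] [DecidableEq α] [DecidableEq γ]
    (p : Ω → ℝ) (A : Ω → α) (C : Ω → γ) : ℝ :=
  ent p (fun ω => (A ω, C ω)) - ent p C

/-- Conditional mutual information `I(A; B | C)`. -/
noncomputable def condMutInfo {Ω α β γ : Type*} [Fintype Ω] [DecidableEq α] [DecidableEq β]
    [DecidableEq γ] (p : Ω → ℝ) (A : Ω → α) (B : Ω → β) (C : Ω → γ) : ℝ :=
  ent p (fun ω => (A ω, C ω)) + ent p (fun ω => (B ω, C ω))
    - ent p (fun ω => (A ω, B ω, C ω)) - ent p C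

/-- `p` is a probability mass function on the finite type `Ω`. -/
def IsPMF {Ω : Type*} [Fintype Ω] (p : Ω → ℝ) : Prop :=
  (∀ ω, 0 ≤ p ω) ∧ ∑ ω, p ω = 1

/-- Extension of a pmf on `{0, …, n}` to an integer-indexed function (zero out of range). -/
noncomputable def extZ {n : ℕ} (f : Fin (n + 1) → ℝ) (k : ℤ) : ℝ :=
  if h : 0 ≤ k ∧ k ≤ (n : ℤ) then f ⟨k.toNat, by omega⟩ else 0

/-! ### The single-letter quantity `J*` -/

/-- `I(S - X; X)` for independent `X ~ PX` on `{0,…,mx}` and `S ~ θ` on `{0,…,ms}`. -/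
noncomputable def iidMI (mx ms : ℕ) (PX : Fin (mx + 1) → ℝ) (θ : Fin (ms + 1) → ℝ) : ℝ :=
  mutInfo (fun ω : Fin (mx + 1) × Fin (ms + 1) => PX ω.1 * θ ω.2)
    (fun ω => ((ω.2 : ℕ) : ℤ) - ((ω.1 : ℕ) : ℤ)) (fun ω => ω.1)

/-- `J* = min over pmfs θ on 𝒮 of I(S - X; X)`. -/
noncomputable def Jstar (mx ms : ℕ) (PX : Fin (mx + 1) → ℝ) : ℝ :=
  sInf {r : ℝ | ∃ θ : Fin (ms + 1) → ℝ, IsPMF θ ∧ iidMI mx ms PX θ = r}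

/-! ### The structured policy `b*` -/

/-- `ξ(w) = Σ_{(x,s) : s - x = w} PX(x) θ(s)`, the pmf of `W = S - X`. -/
noncomputable def xiOf (mx ms : ℕ) (PX : Fin (mx + 1) → ℝ) (θ : Fin (ms + 1) → ℝ)
    (w : ℤ) : ℝ :=
  ∑ x : Fin (mx + 1), ∑ s : Fin (ms + 1),
    if ((s : ℕ) : ℤ) - ((x : ℕ) : ℤ) = w then PX x * θ s else 0

/-- The structured policy with respect to `(θ, ξ)`:
`b(y|w) = PX(y) θ(y + w) / ξ(w)` for `y ∈ 𝒳 ∩ 𝒴₀(w)` (when `ξ(w) > 0`), else `0`. -/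
noncomputable def bstar (mx my ms : ℕ) (PX : Fin (mx + 1) → ℝ) (θ : Fin (ms + 1) → ℝ)
    (w : ℤ) (y : Fin (my + 1)) : ℝ :=
  if xiOf mx ms PX θ w = 0 then 0
  else extZ PX ((y : ℕ) : ℤ) * extZ θ (((y : ℕ) : ℤ) + w) / xiOf mx ms PX θ w

/-! ### Trajectory spaces, policies and induced joint laws.
Time is indexed from `0`; `ω = (s₁, x, y)` records the initial battery state `S₁ = ω.1`,
the demands `X_{t+1} = ω.2.1 t` and the outputs `Y_{t+1} = ω.2.2 t` for `t = 0, …, T-1`. -/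

/-- Trajectories of horizon `T`. -/
abbrev Traj (mx my ms T : ℕ) :=
  Fin (ms + 1) × (Fin T → Fin (mx + 1)) × (Fin T → Fin (my + 1))

variable {mx my ms T : ℕ}

/-- Demand at (0-based) time `t`, as an integer (junk value `0` for `t ≥ T`). -/
def Xat (ω : Traj mx my ms T) (t : ℕ) : ℤ :=
  if h : t < T then ((ω.2.1 ⟨t, h⟩ : ℕ) : ℤ) else 0

/-- Output at (0-based) time `t`, as an integer (junk value `0` for `t ≥ T`). -/
def Yat (ω : Traj mx my ms T) (t : ℕ) : ℤ :=
  if h : t < T then ((ω.2.2 ⟨t, h⟩ : ℕ) : ℤ) else 0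

/-- Battery state at (0-based) time `t`: `S_{t+1} = S_t + Y_t - X_t`, `Sat ω 0 = S₁`. -/
def Sat (ω : Traj mx my ms T) (t : ℕ) : ℤ :=
  ((ω.1 : ℕ) : ℤ) + ∑ i ∈ Finset.range t, (Yat ω i - Xat ω i)

/-- `W_t = S_t - X_t`. -/
def Wat (ω : Traj mx my ms T) (t : ℕ) : ℤ := Sat ω t - Xat ω t

/-- A general causal (class `Q_A`) randomized battery policy:
`q_t(y_t | x^t, s^t, y^{t-1})`; since `s^t` is determined by `(s₁, x^{t-1}, y^{t-1})`,
the policy is a function of `(x^t, s₁, y^{t-1})`. -/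
def PolicyA (mx my ms : ℕ) : Type :=
  (t : ℕ) → (Fin (t + 1) → Fin (mx + 1)) → Fin (ms + 1) → (Fin t → Fin (my + 1)) →
    Fin (my + 1) → ℝ

/-- A class-`Q_B` policy: `q_t(y_t | x_t, s_t, y^{t-1})`. -/
def PolicyB (mx my ms : ℕ) : Type :=
  (t : ℕ) → Fin (mx + 1) → ℤ → (Fin t → Fin (my + 1)) → Fin (my + 1) → ℝ

/-- The battery state `S_t` computed from `s₁` and the history `(x^t, y^{t-1})`. -/
def hstate {t : ℕ} (s1 : Fin (ms + 1)) (x : Fin (t + 1) → Fin (mx + 1))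
    (y : Fin t → Fin (my + 1)) : ℤ :=
  ((s1 : ℕ) : ℤ) + ∑ i : Fin t, (((y i : ℕ) : ℤ) - ((x i.castSucc : ℕ) : ℤ))

/-- Each `q_t(· | x^t, s^t, y^{t-1})` is a pmf on `𝒴`. -/
def CondPMFA (q : PolicyA mx my ms) : Prop :=
  ∀ (t : ℕ) (x : Fin (t + 1) → Fin (mx + 1)) (s1 : Fin (ms + 1)) (y : Fin t → Fin (my + 1)),
    (∀ yt, 0 ≤ q t x s1 y yt) ∧ ∑ yt, q t x s1 y yt = 1

/-- Feasibility of a class-`Q_A` policy: conditional pmfs supported on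
`𝒴₀(s_t - x_t) = {y ∈ 𝒴 : s_t - x_t + y ∈ 𝒮}`. -/
def FeasibleA (q : PolicyA mx my ms) : Prop :=
  CondPMFA q ∧
  ∀ (t : ℕ) (x : Fin (t + 1) → Fin (mx + 1)) (s1 : Fin (ms + 1)) (y : Fin t → Fin (my + 1)),
    ∀ yt, q t x s1 y yt ≠ 0 →
      0 ≤ hstate s1 x y - ((x (Fin.last t) : ℕ) : ℤ) + ((yt : ℕ) : ℤ) ∧
      hstate s1 x y - ((x (Fin.last t) : ℕ) : ℤ) + ((yt : ℕ) : ℤ) ≤ (ms : ℤ)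

/-- Each `q_t(· | x_t, s_t, y^{t-1})` is a pmf on `𝒴`. -/
def CondPMFB (q : PolicyB mx my ms) : Prop :=
  ∀ (t : ℕ) (xt : Fin (mx + 1)) (s : ℤ) (y : Fin t → Fin (my + 1)),
    (∀ yt, 0 ≤ q t xt s y yt) ∧ ∑ yt, q t xt s y yt = 1

/-- Feasibility of a class-`Q_B` policy. -/
def FeasibleB (q : PolicyB mx my ms) : Prop :=
  CondPMFB q ∧
  ∀ (t : ℕ) (xt : Fin (mx + 1)) (s : ℤ) (y : Fin t → Fin (my + 1)),
    0 ≤ s → s ≤ (ms : ℤ) →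
    ∀ yt, q t xt s y yt ≠ 0 →
      0 ≤ s - ((xt : ℕ) : ℤ) + ((yt : ℕ) : ℤ) ∧
      s - ((xt : ℕ) : ℤ) + ((yt : ℕ) : ℤ) ≤ (ms : ℤ)

/-- The demand prefix `x^t = (x_0, …, x_t)` of a trajectory. -/
def prefX (ω : Traj mx my ms T) (t : Fin T) : Fin ((t : ℕ) + 1) → Fin (mx + 1) :=
  fun i => ω.2.1 ⟨(i : ℕ), lt_of_le_of_lt (Nat.lt_succ_iff.mp i.isLt) t.isLt⟩

/-- The output prefix `y^{t-1} = (y_0, …, y_{t-1})` of a trajectory. -/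
def prefY (ω : Traj mx my ms T) (t : Fin T) : Fin (t : ℕ) → Fin (my + 1) :=
  fun i => ω.2.2 ⟨(i : ℕ), i.isLt.trans t.isLt⟩

/-- Joint law on trajectories induced by i.i.d. demand `PX`, initial battery pmf `PS1`
(independent of the demand), and a class-`Q_A` policy `q`. -/
noncomputable def jointA (PS1 : Fin (ms + 1) → ℝ) (PX : Fin (mx + 1) → ℝ)
    (q : PolicyA mx my ms) (T : ℕ) (ω : Traj mx my ms T) : ℝ :=
  PS1 ω.1 * ∏ t : Fin T,
    (PX (ω.2.1 t) * q (t : ℕ) (prefX ω t) ω.1 (prefY ω t) (ω.2.2 t))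

/-- Weight of a demand trajectory under a Markov chain `(PX1, Qm)`. -/
noncomputable def markovWt (PX1 : Fin (mx + 1) → ℝ) (Qm : Fin (mx + 1) → Fin (mx + 1) → ℝ)
    {T : ℕ} (x : Fin T → Fin (mx + 1)) : ℝ :=
  ∏ t : Fin T,
    if _h : (t : ℕ) = 0 then PX1 (x t)
    else Qm (x ⟨(t : ℕ) - 1, lt_of_le_of_lt (Nat.sub_le _ _) t.isLt⟩) (x t)

/-- Joint law on trajectories induced by Markov demand and a class-`Q_A` policy. -/
noncomputable def jointAMarkov (PS1 : Fin (ms + 1) → ℝ) (PX1 : Fin (mx + 1) → ℝ)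
    (Qm : Fin (mx + 1) → Fin (mx + 1) → ℝ) (q : PolicyA mx my ms) (T : ℕ)
    (ω : Traj mx my ms T) : ℝ :=
  PS1 ω.1 * markovWt PX1 Qm ω.2.1 *
    ∏ t : Fin T, q (t : ℕ) (prefX ω t) ω.1 (prefY ω t) (ω.2.2 t)

/-- Joint law on trajectories induced by Markov demand and a class-`Q_B` policy. -/
noncomputable def jointBMarkov (PS1 : Fin (ms + 1) → ℝ) (PX1 : Fin (mx + 1) → ℝ)
    (Qm : Fin (mx + 1) → Fin (mx + 1) → ℝ) (q : PolicyB mx my ms) (T : ℕ)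
    (ω : Traj mx my ms T) : ℝ :=
  PS1 ω.1 * markovWt PX1 Qm ω.2.1 *
    ∏ t : Fin T, q (t : ℕ) (ω.2.1 t) (Sat ω (t : ℕ)) (prefY ω t) (ω.2.2 t)

/-- The memoryless time-invariant policy `q_t(y | x, s) = b*(y | s - x)`, as a member of the
class of general causal policies. -/
noncomputable def structuredPolicyA (mx my ms : ℕ) (PX : Fin (mx + 1) → ℝ)
    (θ : Fin (ms + 1) → ℝ) : PolicyA mx my ms :=
  fun t x s1 y yt => bstar mx my ms PX θ (hstate s1 x y - ((x (Fin.last t) : ℕ) : ℤ)) yt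



/-! ### Auxiliary lemmas -/

section AuxGeneral
variable {Ω Ω' α α' β : Type*} [Fintype Ω] [Fintype Ω'] [DecidableEq α] [DecidableEq α']
  [DecidableEq β]

lemma pr_eq_zero_of_not_mem_image (p : Ω → ℝ) (Z : Ω → α) {z : α}
    (hz : z ∉ Finset.univ.image Z) : pr p Z z = 0 := by
  apply Finset.sum_eq_zero
  intro ω hω
  simp only [Finset.mem_filter] at hω
  exact absurd (Finset.mem_image.mpr ⟨ω, Finset.mem_univ _, hω.2⟩) hz

lemma ent_eq_sum_finset (p : Ω → ℝ) (Z : Ω → α) (F : Finset α)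
    (hF : ∀ z, pr p Z z ≠ 0 → z ∈ F) :
    ent p Z = -∑ z ∈ F, pr p Z z * Real.logb 2 (pr p Z z) := by
  unfold ent
  congr 1
  have h1 : ∑ z ∈ Finset.univ.image Z, pr p Z z * Real.logb 2 (pr p Z z)
      = ∑ z ∈ F ∪ Finset.univ.image Z, pr p Z z * Real.logb 2 (pr p Z z) := by
    refine Finset.sum_subset Finset.subset_union_right ?_
    intro z _ hz2
    rw [pr_eq_zero_of_not_mem_image p Z hz2]
    simp
  have h2 : ∑ z ∈ F, pr p Z z * Real.logb 2 (pr p Z z)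
      = ∑ z ∈ F ∪ Finset.univ.image Z, pr p Z z * Real.logb 2 (pr p Z z) := by
    refine Finset.sum_subset Finset.subset_union_left ?_
    intro z _ hz2
    have : pr p Z z = 0 := by
      by_contra h; exact hz2 (hF z h)
    rw [this]; simp
  rw [h1, ← h2]

lemma ent_transport (p : Ω → ℝ) (Z : Ω → α) (p' : Ω' → ℝ) (Z' : Ω' → α')
    (F : Finset α) (e : α → α') (he : Set.InjOn e F)
    (hF : ∀ z, pr p Z z ≠ 0 → z ∈ F)
    (hF' : ∀ z', pr p' Z' z' ≠ 0 → z' ∈ F.image e)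
    (hpr : ∀ z ∈ F, pr p' Z' (e z) = pr p Z z) :
    ent p Z = ent p' Z' := by
  rw [ent_eq_sum_finset p Z F hF, ent_eq_sum_finset p' Z' (F.image e) hF']
  congr 1
  rw [Finset.sum_image (fun a ha b hb h => he ha hb h)]
  exact Finset.sum_congr rfl (fun z hz => by rw [hpr z hz])

lemma pr_marg_right (p : Ω → ℝ) (A : Ω → α) (B : Ω → β) (G : Finset α)
    (hG : ∀ ω, A ω ∈ G) (b : β) :
    pr p B b = ∑ a ∈ G, pr p (fun ω => (A ω, B ω)) (a, b) := by
  unfold pr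
  simp only [Finset.sum_filter]
  rw [Finset.sum_comm]
  refine Finset.sum_congr rfl (fun ω _ => ?_)
  simp only [Prod.mk.injEq, ite_and]
  rw [Finset.sum_ite_eq G (A ω) (fun _ => if B ω = b then p ω else 0)]
  simp [hG ω]

lemma pr_marg_left (p : Ω → ℝ) (A : Ω → α) (B : Ω → β) (G : Finset β)
    (hG : ∀ ω, B ω ∈ G) (a : α) :
    pr p A a = ∑ b ∈ G, pr p (fun ω => (A ω, B ω)) (a, b) := by
  unfold pr
  simp only [Finset.sum_filter]
  rw [Finset.sum_comm]
  refine Finset.sum_congr rfl (fun ω _ => ?_)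
  simp only [Prod.mk.injEq, ite_and]
  by_cases ha : A ω = a
  · simp only [ha, if_true]
    rw [Finset.sum_ite_eq G (B ω) (fun _ => p ω)]
    simp [hG ω]
  · simp [ha]

lemma ent_prod_indep {A B : Type*} [Fintype A] [Fintype B] (q1 : A → ℝ) (q2 : B → ℝ)
    (h1 : ∑ a, q1 a = 1) (h2 : ∑ b, q2 b = 1) :
    -∑ ab : A × B, (q1 ab.1 * q2 ab.2) * Real.logb 2 (q1 ab.1 * q2 ab.2)
      = (-∑ a, q1 a * Real.logb 2 (q1 a)) + (-∑ b, q2 b * Real.logb 2 (q2 b)) := by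
  have key : ∀ ab : A × B, (q1 ab.1 * q2 ab.2) * Real.logb 2 (q1 ab.1 * q2 ab.2)
      = q1 ab.1 * Real.logb 2 (q1 ab.1) * q2 ab.2
        + q1 ab.1 * (q2 ab.2 * Real.logb 2 (q2 ab.2)) := by
    rintro ⟨a, b⟩
    rcases eq_or_ne (q1 a) 0 with h | h
    · simp [h]
    rcases eq_or_ne (q2 b) 0 with h' | h'
    · simp [h']
    rw [Real.logb_mul h h']
    ring
  simp only [key]
  rw [Finset.sum_add_distrib]
  have e1 : ∑ ab : A × B, q1 ab.1 * Real.logb 2 (q1 ab.1) * q2 ab.2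
      = ∑ a, q1 a * Real.logb 2 (q1 a) := by
    rw [Fintype.sum_prod_type]
    simp only [← Finset.mul_sum]
    simp [h2]
  have e2 : ∑ ab : A × B, q1 ab.1 * (q2 ab.2 * Real.logb 2 (q2 ab.2))
      = ∑ b, q2 b * Real.logb 2 (q2 b) := by
    rw [Fintype.sum_prod_type]
    simp only [← Finset.mul_sum]
    rw [← Finset.sum_mul, h1, one_mul]
  rw [e1, e2]
  ring

end AuxGeneral

section AuxDom
variable {n mx my ms : ℕ}

lemma extZ_nonneg (f : Fin (n + 1) → ℝ) (hf : ∀ i, 0 ≤ f i) (k : ℤ) : 0 ≤ extZ f k := by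
  unfold extZ; split
  · exact hf _
  · exact le_refl 0

lemma extZ_coe (f : Fin (n + 1) → ℝ) (x : Fin (n + 1)) : extZ f ((x : ℕ) : ℤ) = f x := by
  have hx : (x : ℕ) ≤ n := Nat.lt_succ_iff.mp x.isLt
  rw [extZ, dif_pos ⟨Int.natCast_nonneg _, by exact_mod_cast hx⟩]
  congr 1

lemma extZ_ne_zero {f : Fin (n + 1) → ℝ} {k : ℤ} (h : extZ f k ≠ 0) :
    0 ≤ k ∧ k ≤ (n : ℤ) := by
  by_contra hc
  exact h (dif_neg hc)

variable (PX : Fin (mx + 1) → ℝ) (θ : Fin (ms + 1) → ℝ)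

lemma xi_eq_sumX (w : ℤ) :
    xiOf mx ms PX θ w = ∑ x : Fin (mx + 1), PX x * extZ θ (((x : ℕ) : ℤ) + w) := by
  unfold xiOf
  refine Finset.sum_congr rfl (fun x _ => ?_)
  by_cases h : 0 ≤ ((x : ℕ) : ℤ) + w ∧ ((x : ℕ) : ℤ) + w ≤ (ms : ℤ)
  · have hlt : (((x : ℕ) : ℤ) + w).toNat < ms + 1 := by omega
    rw [Finset.sum_eq_single_of_mem (⟨(((x : ℕ) : ℤ) + w).toNat, hlt⟩ : Fin (ms + 1))
      (Finset.mem_univ _)]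
    · rw [if_pos (by simp; omega)]
      rw [extZ, dif_pos h]
    · intro s _ hs
      rw [if_neg]
      intro hcond
      apply hs
      have : (s : ℕ) = (((x : ℕ) : ℤ) + w).toNat := by omega
      exact Fin.ext this
  · rw [extZ, dif_neg h]
    rw [mul_zero]
    apply Finset.sum_eq_zero
    intro s _
    rw [if_neg]
    intro hcond
    have hs : (s : ℕ) ≤ ms := Nat.lt_succ_iff.mp s.isLt
    omega

lemma term_le_xi (hPX : ∀ i, 0 ≤ PX i) (hθ : ∀ i, 0 ≤ θ i) (x : Fin (mx + 1))
    (w : ℤ) : PX x * extZ θ (((x : ℕ) : ℤ) + w) ≤ xiOf mx ms PX θ w := by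
  rw [xi_eq_sumX]
  exact Finset.single_le_sum
    (f := fun x : Fin (mx + 1) => PX x * extZ θ (((x : ℕ) : ℤ) + w))
    (fun i _ => mul_nonneg (hPX i) (extZ_nonneg θ hθ _)) (Finset.mem_univ x)

lemma xi_nonneg (hPX : ∀ i, 0 ≤ PX i) (hθ : ∀ i, 0 ≤ θ i) (w : ℤ) :
    0 ≤ xiOf mx ms PX θ w := by
  rw [xi_eq_sumX]
  exact Finset.sum_nonneg (fun i _ => mul_nonneg (hPX i) (extZ_nonneg θ hθ _))

lemma term_eq_zero_of_xi_eq_zero (hPX : ∀ i, 0 ≤ PX i) (hθ : ∀ i, 0 ≤ θ i)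
    (x : Fin (mx + 1)) {w : ℤ} (hw : xiOf mx ms PX θ w = 0) :
    PX x * extZ θ (((x : ℕ) : ℤ) + w) = 0 := by
  have h1 := term_le_xi PX θ hPX hθ x w
  have h2 : 0 ≤ PX x * extZ θ (((x : ℕ) : ℤ) + w) :=
    mul_nonneg (hPX x) (extZ_nonneg θ hθ _)
  linarith [hw ▸ h1]

lemma pxth_eq_zero (hPX : ∀ i, 0 ≤ PX i) (hθ : ∀ i, 0 ≤ θ i)
    (x : Fin (mx + 1)) (s : Fin (ms + 1))
    (hw : xiOf mx ms PX θ (((s : ℕ) : ℤ) - ((x : ℕ) : ℤ)) = 0) :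
    PX x * θ s = 0 := by
  have := term_eq_zero_of_xi_eq_zero PX θ hPX hθ x hw
  rwa [show ((x : ℕ) : ℤ) + (((s : ℕ) : ℤ) - ((x : ℕ) : ℤ)) = ((s : ℕ) : ℤ) from by ring,
    extZ_coe] at this

lemma xi_eq_sumY (hxy : mx ≤ my) (w : ℤ) :
    xiOf mx ms PX θ w
      = ∑ y : Fin (my + 1), extZ PX ((y : ℕ) : ℤ) * extZ θ (((y : ℕ) : ℤ) + w) := by
  rw [xi_eq_sumX]
  have hle : mx + 1 ≤ my + 1 := by omega
  have h0 : ∀ y ∈ (Finset.univ : Finset (Fin (my + 1))),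
      y ∉ Finset.univ.image (Fin.castLE hle) →
      extZ PX ((y : ℕ) : ℤ) * extZ θ (((y : ℕ) : ℤ) + w) = 0 := by
    intro y _ hy
    have hy' : mx < (y : ℕ) := by
      by_contra hc
      push_neg at hc
      exact hy (Finset.mem_image.mpr ⟨⟨(y : ℕ), by omega⟩, Finset.mem_univ _, by
        ext; simp⟩)
    rw [extZ, dif_neg (by push_neg; intro _; exact_mod_cast by omega), zero_mul]
  rw [← Finset.sum_subset (Finset.subset_univ _) h0,
    Finset.sum_image (fun a _ b _ h => Fin.castLE_injective hle h)]
  refine Finset.sum_congr rfl (fun x _ => ?_)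
  have hc : ((Fin.castLE hle x : ℕ) : ℤ) = ((x : ℕ) : ℤ) := by simp
  rw [hc, extZ_coe]

lemma termY_eq_zero_of_xi_eq_zero (hxy : mx ≤ my) (hPX : ∀ i, 0 ≤ PX i)
    (hθ : ∀ i, 0 ≤ θ i) (y : Fin (my + 1)) {w : ℤ} (hw : xiOf mx ms PX θ w = 0) :
    extZ PX ((y : ℕ) : ℤ) * extZ θ (((y : ℕ) : ℤ) + w) = 0 := by
  have h1 : extZ PX ((y : ℕ) : ℤ) * extZ θ (((y : ℕ) : ℤ) + w) ≤ xiOf mx ms PX θ w := by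
    rw [xi_eq_sumY PX θ hxy]
    exact Finset.single_le_sum
      (f := fun y : Fin (my + 1) => extZ PX ((y : ℕ) : ℤ) * extZ θ (((y : ℕ) : ℤ) + w))
      (fun i _ => mul_nonneg (extZ_nonneg PX hPX _) (extZ_nonneg θ hθ _))
      (Finset.mem_univ y)
  have h2 : 0 ≤ extZ PX ((y : ℕ) : ℤ) * extZ θ (((y : ℕ) : ℤ) + w) :=
    mul_nonneg (extZ_nonneg PX hPX _) (extZ_nonneg θ hθ _)
  linarith [hw ▸ h1]

lemma bstar_nonneg (hPX : ∀ i, 0 ≤ PX i) (hθ : ∀ i, 0 ≤ θ i) (w : ℤ)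
    (y : Fin (my + 1)) : 0 ≤ bstar mx my ms PX θ w y := by
  unfold bstar
  split
  · exact le_refl 0
  · exact div_nonneg (mul_nonneg (extZ_nonneg PX hPX _) (extZ_nonneg θ hθ _))
      (xi_nonneg PX θ hPX hθ w)

lemma bstar_sum (hxy : mx ≤ my) (w : ℤ) :
    ∑ y : Fin (my + 1), bstar mx my ms PX θ w y
      = if xiOf mx ms PX θ w = 0 then 0 else 1 := by
  unfold bstar
  by_cases h : xiOf mx ms PX θ w = 0
  · simp [h]
  · simp only [if_neg h]
    rw [← Finset.sum_div, ← xi_eq_sumY PX θ hxy, div_self h]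

lemma sum_extZ_Icc (f : Fin (n + 1) → ℝ) :
    ∑ k ∈ Finset.Icc (0 : ℤ) (n : ℤ), extZ f k = ∑ i : Fin (n + 1), f i := by
  have himg : Finset.Icc (0 : ℤ) (n : ℤ)
      = Finset.univ.image (fun i : Fin (n + 1) => ((i : ℕ) : ℤ)) := by
    ext k
    simp only [Finset.mem_Icc, Finset.mem_image, Finset.mem_univ, true_and]
    constructor
    · rintro ⟨h1, h2⟩
      exact ⟨⟨k.toNat, by omega⟩, by simp; omega⟩
    · rintro ⟨i, rfl⟩
      have := Nat.lt_succ_iff.mp i.isLt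
      omega
  rw [himg, Finset.sum_image (fun a _ b _ h => Fin.ext (by exact_mod_cast h))]
  exact Finset.sum_congr rfl (fun i _ => extZ_coe f i)

lemma sum_extZ_superset (f : Fin (n + 1) → ℝ) (F : Finset ℤ)
    (hF : Finset.Icc (0 : ℤ) (n : ℤ) ⊆ F) :
    ∑ k ∈ F, extZ f k = ∑ i : Fin (n + 1), f i := by
  rw [← sum_extZ_Icc f]
  refine (Finset.sum_subset hF ?_).symm
  intro k _ hk
  rw [extZ, dif_neg]
  simp only [Finset.mem_Icc] at hk
  omega

end AuxDom

section AuxMain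
variable {mx my ms : ℕ} (hxy : mx ≤ my) (PX : Fin (mx + 1) → ℝ) (θ : Fin (ms + 1) → ℝ)

/-- The joint law in Statement 9. -/
noncomputable def pJoint (mx my ms : ℕ) (PX : Fin (mx + 1) → ℝ) (θ : Fin (ms + 1) → ℝ)
    (ω : Fin (mx + 1) × Fin (ms + 1) × Fin (my + 1)) : ℝ :=
  PX ω.1 * θ ω.2.1 * bstar mx my ms PX θ (((ω.2.1 : ℕ) : ℤ) - ((ω.1 : ℕ) : ℤ)) ω.2.2

lemma pr_XS (hPX : ∀ i, 0 ≤ PX i) (hθ : ∀ i, 0 ≤ θ i) (hxy : mx ≤ my)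
    (x0 : Fin (mx + 1)) (s0 : Fin (ms + 1)) :
    pr (pJoint mx my ms PX θ) (fun ω => (ω.1, ω.2.1)) (x0, s0) = PX x0 * θ s0 := by
  unfold pr
  rw [Finset.sum_filter]
  simp only [Fintype.sum_prod_type]
  rw [Finset.sum_eq_single_of_mem x0 (Finset.mem_univ _) (fun a _ ha => by
    apply Finset.sum_eq_zero; intro b _; apply Finset.sum_eq_zero; intro c _
    exact if_neg (by simp [Prod.ext_iff]; tauto))]
  rw [Finset.sum_eq_single_of_mem s0 (Finset.mem_univ _) (fun b _ hb => by
    apply Finset.sum_eq_zero; intro c _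
    exact if_neg (by simp [Prod.ext_iff]; tauto))]
  simp only [Prod.mk.injEq, and_self, ite_true]
  unfold pJoint
  simp only [mul_assoc]
  simp only [← Finset.mul_sum]
  rw [bstar_sum PX θ hxy]
  by_cases h : xiOf mx ms PX θ (((s0 : ℕ) : ℤ) - ((x0 : ℕ) : ℤ)) = 0
  · rw [if_pos h, mul_zero, mul_zero]
    exact (pxth_eq_zero PX θ hPX hθ x0 s0 h).symm
  · rw [if_neg h, mul_one]

lemma pr_WX (hPX : ∀ i, 0 ≤ PX i) (hθ : ∀ i, 0 ≤ θ i) (hxy : mx ≤ my)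
    (w : ℤ) (x0 : Fin (mx + 1)) :
    pr (pJoint mx my ms PX θ)
      (fun ω => (((ω.2.1 : ℕ) : ℤ) - ((ω.1 : ℕ) : ℤ), ω.1)) (w, x0)
      = PX x0 * extZ θ (((x0 : ℕ) : ℤ) + w) := by
  unfold pr
  rw [Finset.sum_filter]
  simp only [Fintype.sum_prod_type]
  rw [Finset.sum_eq_single_of_mem x0 (Finset.mem_univ _) (fun a _ ha => by
    apply Finset.sum_eq_zero; intro b _; apply Finset.sum_eq_zero; intro c _
    exact if_neg (by simp [Prod.ext_iff]; tauto))]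
  by_cases h : 0 ≤ ((x0 : ℕ) : ℤ) + w ∧ ((x0 : ℕ) : ℤ) + w ≤ (ms : ℤ)
  · have hlt : (((x0 : ℕ) : ℤ) + w).toNat < ms + 1 := by omega
    set s0 : Fin (ms + 1) := ⟨(((x0 : ℕ) : ℤ) + w).toNat, hlt⟩ with hs0
    have hws : ((s0 : ℕ) : ℤ) - ((x0 : ℕ) : ℤ) = w := by
      simp only [hs0]
      simp
      omega
    rw [Finset.sum_eq_single_of_mem s0 (Finset.mem_univ _) (fun b _ hb => by
      apply Finset.sum_eq_zero; intro c _
      refine if_neg ?_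
      simp only [Prod.ext_iff]
      rintro ⟨hcond, -⟩
      apply hb
      apply Fin.ext
      have hbms : (b : ℕ) ≤ ms := Nat.lt_succ_iff.mp b.isLt
      simp only [hs0]
      omega)]
    have hcond : (((s0 : ℕ) : ℤ) - ((x0 : ℕ) : ℤ), x0) = ((w, x0) : ℤ × Fin (mx + 1)) := by
      rw [hws]
    rw [Finset.sum_congr rfl (fun c _ => if_pos hcond)]
    unfold pJoint
    simp only [mul_assoc, hws]
    rw [← Finset.mul_sum, ← Finset.mul_sum, bstar_sum PX θ hxy]
    have hext : extZ θ (((x0 : ℕ) : ℤ) + w) = θ s0 := by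
      rw [extZ, dif_pos h]
    by_cases hxi : xiOf mx ms PX θ w = 0
    · rw [if_pos hxi, mul_zero, mul_zero, hext]
      have := pxth_eq_zero PX θ hPX hθ x0 s0 (by rwa [hws])
      linarith
    · rw [if_neg hxi, mul_one, hext]
  · have hz : extZ θ (((x0 : ℕ) : ℤ) + w) = 0 := dif_neg h
    rw [hz, mul_zero]
    apply Finset.sum_eq_zero; intro b _
    apply Finset.sum_eq_zero; intro c _
    refine if_neg ?_
    simp only [Prod.ext_iff]
    rintro ⟨hcond, -⟩
    have hbms : (b : ℕ) ≤ ms := Nat.lt_succ_iff.mp b.isLt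
    omega

lemma pr_WY (hPX : ∀ i, 0 ≤ PX i) (hθ : ∀ i, 0 ≤ θ i) (hxy : mx ≤ my)
    (w : ℤ) (y0 : Fin (my + 1)) :
    pr (pJoint mx my ms PX θ)
      (fun ω => (((ω.2.1 : ℕ) : ℤ) - ((ω.1 : ℕ) : ℤ), ω.2.2)) (w, y0)
      = extZ PX ((y0 : ℕ) : ℤ) * extZ θ (((y0 : ℕ) : ℤ) + w) := by
  unfold pr
  rw [Finset.sum_filter]
  simp only [Fintype.sum_prod_type]
  have step1 : ∀ (a : Fin (mx + 1)) (b : Fin (ms + 1)),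
      (∑ c : Fin (my + 1),
        if ((((b : ℕ) : ℤ) - ((a : ℕ) : ℤ), c) = ((w, y0) : ℤ × Fin (my + 1)))
          then pJoint mx my ms PX θ (a, b, c) else 0)
      = (if (((b : ℕ) : ℤ) - ((a : ℕ) : ℤ) = w) then PX a * θ b else 0)
          * bstar mx my ms PX θ w y0 := by
    intro a b
    by_cases hab : (((b : ℕ) : ℤ) - ((a : ℕ) : ℤ)) = w
    · rw [if_pos hab]
      rw [Finset.sum_eq_single_of_mem y0 (Finset.mem_univ _) (fun c _ hc => by
        exact if_neg (by simp [Prod.ext_iff]; tauto))]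
      rw [if_pos (by rw [hab])]
      unfold pJoint
      rw [hab]
    · rw [if_neg hab, zero_mul]
      apply Finset.sum_eq_zero; intro c _
      exact if_neg (by simp [Prod.ext_iff]; tauto)
  simp only [step1]
  simp only [← Finset.sum_mul]
  rw [show (∑ a : Fin (mx + 1), ∑ b : Fin (ms + 1),
      if (((b : ℕ) : ℤ) - ((a : ℕ) : ℤ) = w) then PX a * θ b else 0)
      = xiOf mx ms PX θ w from rfl]
  by_cases hxi : xiOf mx ms PX θ w = 0
  · rw [hxi, zero_mul]
    exact (termY_eq_zero_of_xi_eq_zero PX θ hxy hPX hθ y0 hxi).symm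
  · rw [bstar, if_neg hxi, mul_comm, div_mul_cancel₀ _ hxi]

lemma pr_X (hPX : ∀ i, 0 ≤ PX i) (hθ : ∀ i, 0 ≤ θ i) (hxy : mx ≤ my)
    (hθ1 : ∑ i, θ i = 1) (x : Fin (mx + 1)) :
    pr (pJoint mx my ms PX θ) (fun ω => ω.1) x = PX x := by
  rw [pr_marg_left (pJoint mx my ms PX θ) (fun ω => ω.1) (fun ω => ω.2.1)
    Finset.univ (fun ω => Finset.mem_univ _) x]
  simp only [pr_XS PX θ hPX hθ hxy]
  rw [← Finset.mul_sum, hθ1, mul_one]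

lemma pr_S (hPX : ∀ i, 0 ≤ PX i) (hθ : ∀ i, 0 ≤ θ i) (hxy : mx ≤ my)
    (hPX1 : ∑ i, PX i = 1) (s : Fin (ms + 1)) :
    pr (pJoint mx my ms PX θ) (fun ω => ω.2.1) s = θ s := by
  rw [pr_marg_right (pJoint mx my ms PX θ) (fun ω => ω.1) (fun ω => ω.2.1)
    Finset.univ (fun ω => Finset.mem_univ _) s]
  simp only [pr_XS PX θ hPX hθ hxy]
  rw [← Finset.sum_mul, hPX1, one_mul]

lemma pr_Y (hPX : ∀ i, 0 ≤ PX i) (hθ : ∀ i, 0 ≤ θ i) (hxy : mx ≤ my)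
    (hθ1 : ∑ i, θ i = 1) (y : Fin (my + 1)) :
    pr (pJoint mx my ms PX θ) (fun ω => ω.2.2) y = extZ PX ((y : ℕ) : ℤ) := by
  have hG : ∀ ω : Fin (mx + 1) × Fin (ms + 1) × Fin (my + 1),
      ((ω.2.1 : ℕ) : ℤ) - ((ω.1 : ℕ) : ℤ) ∈ Finset.Icc (-(mx : ℤ)) (ms : ℤ) := by
    intro ω
    have h1 : (ω.1 : ℕ) ≤ mx := Nat.lt_succ_iff.mp ω.1.isLt
    have h2 : (ω.2.1 : ℕ) ≤ ms := Nat.lt_succ_iff.mp ω.2.1.isLt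
    simp only [Finset.mem_Icc]
    omega
  rw [pr_marg_right (pJoint mx my ms PX θ)
    (fun ω => ((ω.2.1 : ℕ) : ℤ) - ((ω.1 : ℕ) : ℤ)) (fun ω => ω.2.2)
    (Finset.Icc (-(mx : ℤ)) (ms : ℤ)) hG y]
  simp only [pr_WY PX θ hPX hθ hxy]
  rw [← Finset.mul_sum]
  by_cases hy : (y : ℕ) ≤ mx
  · have himg : ∑ w ∈ Finset.Icc (-(mx : ℤ)) (ms : ℤ), extZ θ (((y : ℕ) : ℤ) + w)
        = ∑ k ∈ (Finset.Icc (-(mx : ℤ)) (ms : ℤ)).image (fun w => ((y : ℕ) : ℤ) + w),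
            extZ θ k := by
      rw [Finset.sum_image (fun a _ b _ h => by omega)]
    have hsub : Finset.Icc (0 : ℤ) (ms : ℤ)
        ⊆ (Finset.Icc (-(mx : ℤ)) (ms : ℤ)).image (fun w => ((y : ℕ) : ℤ) + w) := by
      intro k hk
      simp only [Finset.mem_Icc] at hk
      refine Finset.mem_image.mpr ⟨k - ((y : ℕ) : ℤ), ?_, by ring⟩
      simp only [Finset.mem_Icc]
      omega
    rw [himg, sum_extZ_superset θ _ hsub, hθ1, mul_one]
  · have h0 : extZ PX ((y : ℕ) : ℤ) = 0 := by
      rw [extZ, dif_neg]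
      push_neg
      intro _
      have : (mx : ℤ) < ((y : ℕ) : ℤ) := by exact_mod_cast by omega
      omega
    rw [h0, zero_mul]

lemma ent_Y_eq_X (hPX : ∀ i, 0 ≤ PX i) (hθ : ∀ i, 0 ≤ θ i) (hxy : mx ≤ my)
    (hθ1 : ∑ i, θ i = 1) :
    ent (pJoint mx my ms PX θ) (fun ω => ω.2.2)
      = ent (pJoint mx my ms PX θ) (fun ω => ω.1) := by
  have hle : mx + 1 ≤ my + 1 := by omega
  refine (ent_transport (pJoint mx my ms PX θ) (fun ω => ω.1)
    (pJoint mx my ms PX θ) (fun ω => ω.2.2) Finset.univ (Fin.castLE hle)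
    (fun a _ b _ h => Fin.castLE_injective hle h)
    (fun z _ => Finset.mem_univ z) ?_ ?_).symm
  · intro y hy
    rw [pr_Y PX θ hPX hθ hxy hθ1] at hy
    have hym : (y : ℕ) ≤ mx := by
      rcases extZ_ne_zero hy with ⟨-, h2⟩
      exact_mod_cast h2
    exact Finset.mem_image.mpr ⟨⟨(y : ℕ), by omega⟩, Finset.mem_univ _, by ext; simp⟩
  · intro x _
    rw [pr_Y PX θ hPX hθ hxy hθ1, pr_X PX θ hPX hθ hxy hθ1]
    rw [show ((Fin.castLE hle x : ℕ) : ℤ) = ((x : ℕ) : ℤ) from by simp, extZ_coe]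

lemma ent_WY_eq_WX (hPX : ∀ i, 0 ≤ PX i) (hθ : ∀ i, 0 ≤ θ i) (hxy : mx ≤ my) :
    ent (pJoint mx my ms PX θ)
      (fun ω => (((ω.2.1 : ℕ) : ℤ) - ((ω.1 : ℕ) : ℤ), ω.2.2))
      = ent (pJoint mx my ms PX θ)
        (fun ω => (((ω.2.1 : ℕ) : ℤ) - ((ω.1 : ℕ) : ℤ), ω.1)) := by
  have hle : mx + 1 ≤ my + 1 := by omega
  refine (ent_transport (pJoint mx my ms PX θ)
    (fun ω => (((ω.2.1 : ℕ) : ℤ) - ((ω.1 : ℕ) : ℤ), ω.1))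
    (pJoint mx my ms PX θ)
    (fun ω => (((ω.2.1 : ℕ) : ℤ) - ((ω.1 : ℕ) : ℤ), ω.2.2))
    ((Finset.Icc (-(mx : ℤ)) (ms : ℤ)) ×ˢ Finset.univ)
    (fun z => (z.1, Fin.castLE hle z.2))
    (fun a _ b _ h => by
      rcases Prod.mk.injEq .. ▸ h with ⟨h1, h2⟩
      exact Prod.ext h1 (Fin.castLE_injective hle h2))
    ?_ ?_ ?_).symm
  · rintro ⟨w, x⟩ hz
    rw [pr_WX PX θ hPX hθ hxy] at hz
    have hθne : extZ θ (((x : ℕ) : ℤ) + w) ≠ 0 := fun h => hz (by rw [h, mul_zero])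
    rcases extZ_ne_zero hθne with ⟨h1, h2⟩
    have hxm : (x : ℕ) ≤ mx := Nat.lt_succ_iff.mp x.isLt
    refine Finset.mem_product.mpr ⟨?_, Finset.mem_univ _⟩
    simp only [Finset.mem_Icc]
    omega
  · rintro ⟨w, y⟩ hz
    rw [pr_WY PX θ hPX hθ hxy] at hz
    have hPXne : extZ PX ((y : ℕ) : ℤ) ≠ 0 := fun h => hz (by rw [h, zero_mul])
    have hθne : extZ θ (((y : ℕ) : ℤ) + w) ≠ 0 := fun h => hz (by rw [h, mul_zero])
    rcases extZ_ne_zero hPXne with ⟨-, h2⟩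
    rcases extZ_ne_zero hθne with ⟨h3, h4⟩
    have hym : (y : ℕ) ≤ mx := by exact_mod_cast h2
    refine Finset.mem_image.mpr ⟨(w, ⟨(y : ℕ), by omega⟩), ?_, ?_⟩
    · refine Finset.mem_product.mpr ⟨?_, Finset.mem_univ _⟩
      simp only [Finset.mem_Icc]
      omega
    · exact Prod.ext rfl (by ext; simp)
  · rintro ⟨w, x⟩ _
    rw [pr_WX PX θ hPX hθ hxy, pr_WY PX θ hPX hθ hxy]
    rw [show ((Fin.castLE hle x : ℕ) : ℤ) = ((x : ℕ) : ℤ) from by simp, extZ_coe]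

lemma ent_WX_eq_XS (hPX : ∀ i, 0 ≤ PX i) (hθ : ∀ i, 0 ≤ θ i) (hxy : mx ≤ my) :
    ent (pJoint mx my ms PX θ)
      (fun ω => (((ω.2.1 : ℕ) : ℤ) - ((ω.1 : ℕ) : ℤ), ω.1))
      = ent (pJoint mx my ms PX θ) (fun ω => (ω.1, ω.2.1)) := by
  refine (ent_transport (pJoint mx my ms PX θ) (fun ω => (ω.1, ω.2.1))
    (pJoint mx my ms PX θ)
    (fun ω => (((ω.2.1 : ℕ) : ℤ) - ((ω.1 : ℕ) : ℤ), ω.1))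
    Finset.univ
    (fun z => (((z.2 : ℕ) : ℤ) - ((z.1 : ℕ) : ℤ), z.1))
    (fun a _ b _ h => by
      rcases Prod.mk.injEq .. ▸ h with ⟨h1, h2⟩
      refine Prod.ext h2 (Fin.ext ?_)
      have : ((a.1 : ℕ) : ℤ) = ((b.1 : ℕ) : ℤ) := by rw [h2]
      omega)
    (fun z _ => Finset.mem_univ z) ?_ ?_).symm
  · rintro ⟨w, x⟩ hz
    rw [pr_WX PX θ hPX hθ hxy] at hz
    have hθne : extZ θ (((x : ℕ) : ℤ) + w) ≠ 0 := fun h => hz (by rw [h, mul_zero])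
    rcases extZ_ne_zero hθne with ⟨h1, h2⟩
    refine Finset.mem_image.mpr ⟨(x, ⟨(((x : ℕ) : ℤ) + w).toNat, by omega⟩),
      Finset.mem_univ _, ?_⟩
    refine Prod.ext ?_ rfl
    simp only
    omega
  · rintro ⟨x, s⟩ _
    rw [pr_XS PX θ hPX hθ hxy, pr_WX PX θ hPX hθ hxy]
    rw [show ((x : ℕ) : ℤ) + (((s : ℕ) : ℤ) - ((x : ℕ) : ℤ)) = ((s : ℕ) : ℤ) from by ring,
      extZ_coe]

lemma ent_XS_add (hPX : ∀ i, 0 ≤ PX i) (hθ : ∀ i, 0 ≤ θ i) (hxy : mx ≤ my)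
    (hPX1 : ∑ i, PX i = 1) (hθ1 : ∑ i, θ i = 1) :
    ent (pJoint mx my ms PX θ) (fun ω => (ω.1, ω.2.1))
      = ent (pJoint mx my ms PX θ) (fun ω => ω.1)
        + ent (pJoint mx my ms PX θ) (fun ω => ω.2.1) := by
  rw [ent_eq_sum_finset (pJoint mx my ms PX θ) (fun ω => (ω.1, ω.2.1)) Finset.univ
      (fun z _ => Finset.mem_univ z),
    ent_eq_sum_finset (pJoint mx my ms PX θ)
      (fun ω : Fin (mx + 1) × Fin (ms + 1) × Fin (my + 1) => ω.1) Finset.univ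
      (fun z _ => Finset.mem_univ z),
    ent_eq_sum_finset (pJoint mx my ms PX θ)
      (fun ω : Fin (mx + 1) × Fin (ms + 1) × Fin (my + 1) => ω.2.1) Finset.univ
      (fun z _ => Finset.mem_univ z)]
  have h := ent_prod_indep PX θ hPX1 hθ1
  calc -∑ z : Fin (mx + 1) × Fin (ms + 1),
        pr (pJoint mx my ms PX θ) (fun ω => (ω.1, ω.2.1)) z
          * Real.logb 2 (pr (pJoint mx my ms PX θ) (fun ω => (ω.1, ω.2.1)) z)
      = -∑ z : Fin (mx + 1) × Fin (ms + 1),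
          (PX z.1 * θ z.2) * Real.logb 2 (PX z.1 * θ z.2) := by
        congr 1
        refine Finset.sum_congr rfl (fun z _ => ?_)
        rw [show z = (z.1, z.2) from rfl, pr_XS PX θ hPX hθ hxy]
    _ = (-∑ a, PX a * Real.logb 2 (PX a)) + (-∑ b, θ b * Real.logb 2 (θ b)) := h
    _ = _ := by
        congr 1
        · congr 1
          exact Finset.sum_congr rfl (fun x _ => by
            rw [pr_X PX θ hPX hθ hxy hθ1])
        · congr 1
          exact Finset.sum_congr rfl (fun s _ => by
            rw [pr_S PX θ hPX hθ hxy hPX1])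

end AuxMain

/-- Under the structured policy `b*` w.r.t. `(θ, ξ)`, with `X ~ PX` and
`S ~ θ` independent, `W = S - X` and `Y | W ~ b*(· | W)`:
`I(W; Y) = I(W; X) = H(W) - H(S)`. -/
theorem structured_policy_mutInfo (mx my ms : ℕ) (hxy : mx ≤ my)
    (PX : Fin (mx + 1) → ℝ) (hPX : IsPMF PX)
    (θ : Fin (ms + 1) → ℝ) (hθ : IsPMF θ) :
    let p : Fin (mx + 1) × Fin (ms + 1) × Fin (my + 1) → ℝ :=
      fun ω => PX ω.1 * θ ω.2.1 *
        bstar mx my ms PX θ (((ω.2.1 : ℕ) : ℤ) - ((ω.1 : ℕ) : ℤ)) ω.2.2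
    let Wv : Fin (mx + 1) × Fin (ms + 1) × Fin (my + 1) → ℤ :=
      fun ω => ((ω.2.1 : ℕ) : ℤ) - ((ω.1 : ℕ) : ℤ)
    mutInfo p Wv (fun ω => ω.2.2) = mutInfo p Wv (fun ω => ω.1) ∧
    mutInfo p Wv (fun ω => ω.1) = ent p Wv - ent p (fun ω => ω.2.1) := by
  intro p Wv
  obtain ⟨hPX0, hPX1⟩ := hPX
  obtain ⟨hθ0, hθ1⟩ := hθ
  have hE1 := ent_Y_eq_X PX θ hPX0 hθ0 hxy hθ1
  have hE2 := ent_WY_eq_WX PX θ hPX0 hθ0 hxy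
  have hE3 := ent_WX_eq_XS PX θ hPX0 hθ0 hxy
  have hE4 := ent_XS_add PX θ hPX0 hθ0 hxy hPX1 hθ1
  have hS := fun s => pr_S PX θ hPX0 hθ0 hxy hPX1 s
  constructor
  · show ent (pJoint mx my ms PX θ)
          (fun ω => (((ω.2.1 : ℕ) : ℤ) - ((ω.1 : ℕ) : ℤ)))
        + ent (pJoint mx my ms PX θ) (fun ω => ω.2.2)
        - ent (pJoint mx my ms PX θ)
            (fun ω => ((((ω.2.1 : ℕ) : ℤ) - ((ω.1 : ℕ) : ℤ)), ω.2.2))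
      = ent (pJoint mx my ms PX θ)
          (fun ω => (((ω.2.1 : ℕ) : ℤ) - ((ω.1 : ℕ) : ℤ)))
        + ent (pJoint mx my ms PX θ) (fun ω => ω.1)
        - ent (pJoint mx my ms PX θ)
            (fun ω => ((((ω.2.1 : ℕ) : ℤ) - ((ω.1 : ℕ) : ℤ)), ω.1))
    rw [hE1, hE2]
  · show ent (pJoint mx my ms PX θ)
          (fun ω => (((ω.2.1 : ℕ) : ℤ) - ((ω.1 : ℕ) : ℤ)))
        + ent (pJoint mx my ms PX θ) (fun ω => ω.1)
        - ent (pJoint mx my ms PX θ)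
            (fun ω => ((((ω.2.1 : ℕ) : ℤ) - ((ω.1 : ℕ) : ℤ)), ω.1))
      = ent (pJoint mx my ms PX θ)
          (fun ω => (((ω.2.1 : ℕ) : ℤ) - ((ω.1 : ℕ) : ℤ)))
        - ent (pJoint mx my ms PX θ) (fun ω => ω.2.1)
    rw [hE3, hE4]
    ring

end SmartMeter
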